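/- Let G = ((V,E),(V_1,V_2), v_in, AP, L) be a labeled game graph that is controllably recurrent and let 0 ≤ m ≤ |AP|. Then there exists a player-1 strategy π_1 such that for every player-2 strategy π_2, |L(ω(v_in,π_1,π_2))| ≥ m, if and only if every end component U of G with v_in ∈ U satisfies |⋃_{u∈U} L(u)| ≥ m. -/

import Mathlib

/-- `π` is a valid strategy for the player owning the vertices satisfying `owns`:
for every history `w` and current vertex `v` owned by the player, the chosen
successor `π w v` is along an edge of the game graph. -/
def IsStrat {V : Type*} (E : V → V → Prop) (owns : V → Prop)
    (π : List V → V → V) : Prop :=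
  ∀ (w : List V) (v : V), owns v → E v (π w v)

/-- Auxiliary function computing, after `i` steps of the play from `v`, the pair
(current vertex, history of previously visited vertices).  Here `P1 v = true` means
`v` is a player-1 vertex, and `P1 v = false` that it is a player-2 vertex. -/
def playSeq {V : Type*} (P1 : V → Bool) (π1 π2 : List V → V → V) (v : V) :
    ℕ → V × List V
  | 0 => (v, [])
  | i + 1 =>
    let p := playSeq P1 π1 π2 v i
    (if P1 p.1 then π1 p.2 p.1 else π2 p.2 p.1, p.2 ++ [p.1])

/-- The unique play `ω(v, π1, π2)`: the `i`-th vertex of the infinite play starting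
at `v` in which player 1 (resp. player 2) resolves choices at vertices `u` with
`P1 u = true` (resp. `P1 u = false`) using strategy `π1` (resp. `π2`). -/
def play {V : Type*} (P1 : V → Bool) (π1 π2 : List V → V → V) (v : V) (i : ℕ) : V :=
  (playSeq P1 π1 π2 v i).1

/-- An end component of a labeled game graph: a nonempty set `U` of vertices that is
(i) strongly connected — between any two vertices of `U` there is a path of positive
length using only vertices of `U` — and (ii) player-1 closed — every edge leaving a
player-1 vertex of `U` stays in `U`. -/
def IsEndComponent {V : Type*} (E : V → V → Prop) (P1 : V → Bool) (U : Set V) :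
    Prop :=
  U.Nonempty ∧
    (∀ u ∈ U, ∀ u' ∈ U,
      Relation.TransGen (fun a b => a ∈ U ∧ b ∈ U ∧ E a b) u u') ∧
    (∀ u ∈ U, P1 u = true → ∀ u', E u u' → u' ∈ U)

open Classical

namespace CRGaux
variable {V : Type*} (E : V → V → Prop) (P1 : V → Bool) (vin : V)

noncomputable def succL [Fintype V] (v : V) : List V :=
  (Finset.univ.filter (fun u => E v u)).toList

lemma mem_succL [Fintype V] {v u : V} : u ∈ succL E v ↔ E v u := by
  simp [succL]

/-- round robin successor choice -/
noncomputable def rr [Fintype V] (v : V) (n : ℕ) : V :=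
  if h : succL E v = [] then v
  else (succL E v).get ⟨n % (succL E v).length,
    Nat.mod_lt _ (List.length_pos_iff.mpr h)⟩

lemma E_rr [Fintype V] {v : V} (hv : ∃ u, E v u) (n : ℕ) : E v (rr E v n) := by
  obtain ⟨u, hu⟩ := hv
  have hne : succL E v ≠ [] := by
    intro h0
    have := (mem_succL E).mpr hu
    simp [h0] at this
  rw [rr, dif_neg hne]
  exact (mem_succL E).mp (List.get_mem _ _)

lemma rr_hit [Fintype V] {v u : V} (hu : E v u) (n : ℕ) :
    ∃ c, n ≤ c ∧ rr E v c = u := by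
  have hmem : u ∈ succL E v := (mem_succL E).mpr hu
  have hne : succL E v ≠ [] := List.ne_nil_of_mem hmem
  obtain ⟨⟨d, hd⟩, hget⟩ := List.mem_iff_get.mp hmem
  set l := succL E v with hl
  refine ⟨d + l.length * n, ?_, ?_⟩
  · have : 1 ≤ l.length := List.length_pos_iff.mpr hne
    nlinarith
  · rw [rr, dif_neg hne]
    have hmod : (d + l.length * n) % l.length = d := by
      rw [Nat.add_mul_mod_self_left, Nat.mod_eq_of_lt hd]
    simpa [← hl, hmod] using hget


def attr : ℕ → Set V
  | 0 => {vin}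
  | k+1 => attr k ∪ {v | (P1 v = true ∧ ∃ u ∈ attr k, E v u) ∨
      (P1 v = false ∧ ∀ u, E v u → u ∈ attr k)}

def Attr : Set V := ⋃ k, attr E P1 vin k

lemma attr_mono {j k : ℕ} (h : j ≤ k) : attr E P1 vin j ⊆ attr E P1 vin k := by
  induction k with
  | zero => simp_all
  | succ k ih =>
    rcases Nat.lt_or_ge j (k+1) with h' | h'
    · exact (ih (Nat.lt_succ_iff.mp h')).trans (by intro x hx; exact Or.inl hx)
    · have : j = k + 1 := le_antisymm h h'
      subst this; exact subset_rfl

lemma vin_mem_attr : vin ∈ Attr E P1 vin :=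
  Set.mem_iUnion.mpr ⟨0, rfl⟩

noncomputable def rk (v : V) : ℕ := sInf {k | v ∈ attr E P1 vin k}

lemma mem_attr_rk {v : V} (hv : v ∈ Attr E P1 vin) :
    v ∈ attr E P1 vin (rk E P1 vin v) := by
  obtain ⟨k, hk⟩ := Set.mem_iUnion.mp hv
  exact Nat.sInf_mem (⟨k, hk⟩ : {k | v ∈ attr E P1 vin k}.Nonempty)

lemma rk_le {v : V} {k : ℕ} (hv : v ∈ attr E P1 vin k) : rk E P1 vin v ≤ k :=
  Nat.sInf_le hv

lemma rk_vin : rk E P1 vin vin = 0 := Nat.le_zero.mp (rk_le E P1 vin rfl)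

/-- key step lemma -/
lemma attr_step {v : V} (hv : v ∈ Attr E P1 vin) (hne : v ≠ vin) :
    (P1 v = true → ∃ u, E v u ∧ u ∈ Attr E P1 vin ∧ rk E P1 vin u < rk E P1 vin v) ∧
    (P1 v = false → ∀ u, E v u → u ∈ Attr E P1 vin ∧ rk E P1 vin u < rk E P1 vin v) := by
  have hmem : v ∈ attr E P1 vin (rk E P1 vin v) := mem_attr_rk E P1 vin hv
  have hk0 : rk E P1 vin v ≠ 0 := by
    intro h0
    rw [h0] at hmem
    exact hne hmem
  obtain ⟨k', hk'⟩ := Nat.exists_eq_succ_of_ne_zero hk0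
  rw [hk'] at hmem
  have hnot : v ∉ attr E P1 vin k' := by
    intro hmem'
    have := rk_le E P1 vin hmem'
    omega
  rw [hk']
  have hcl : (P1 v = true ∧ ∃ u ∈ attr E P1 vin k', E v u) ∨
      (P1 v = false ∧ ∀ u, E v u → u ∈ attr E P1 vin k') := by
    rcases hmem with h | h
    · exact absurd h hnot
    · exact h
  constructor
  · intro hp1
    rcases hcl with ⟨_, u, hu, he⟩ | ⟨hp, _⟩
    · exact ⟨u, he, Set.mem_iUnion.mpr ⟨k', hu⟩, lt_of_le_of_lt (rk_le E P1 vin hu) (Nat.lt_succ_self k')⟩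
    · simp [hp1] at hp
  · intro hp2 u he
    rcases hcl with ⟨hp, _⟩ | ⟨_, hall⟩
    · simp [hp2] at hp
    · exact ⟨Set.mem_iUnion.mpr ⟨k', hall u he⟩,
        lt_of_le_of_lt (rk_le E P1 vin (hall u he)) (Nat.lt_succ_self k')⟩

noncomputable def Kb [Fintype V] : ℕ := Finset.univ.sup (rk E P1 vin)

lemma rk_le_Kb [Fintype V] (v : V) : rk E P1 vin v ≤ Kb E P1 vin :=
  Finset.le_sup (Finset.mem_univ v)

lemma mem_attr_Kb [Fintype V] {v : V} (hv : v ∈ Attr E P1 vin) :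
    v ∈ attr E P1 vin (Kb E P1 vin) :=
  attr_mono E P1 vin (rk_le_Kb E P1 vin v) (mem_attr_rk E P1 vin hv)


lemma play_succ (π1 π2 : List V → V → V) (v : V) (i : ℕ) :
    play P1 π1 π2 v (i+1) =
      (if P1 (play P1 π1 π2 v i) then π1 (playSeq P1 π1 π2 v i).2 (play P1 π1 π2 v i)
       else π2 (playSeq P1 π1 π2 v i).2 (play P1 π1 π2 v i)) := rfl

lemma playSeq_snd_succ (π1 π2 : List V → V → V) (v : V) (i : ℕ) :
    (playSeq P1 π1 π2 v (i+1)).2 = (playSeq P1 π1 π2 v i).2 ++ [play P1 π1 π2 v i] := rfl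

/-- completeness of the attractor -/
lemma attr_complete [Fintype V] (hE : ∀ v, ∃ u, E v u) {v : V}
    (hv : ∃ π1, IsStrat E (fun u => P1 u = true) π1 ∧
        ∀ π2, IsStrat E (fun u => P1 u = false) π2 →
          ∃ i : ℕ, play P1 π1 π2 v i = vin) :
    v ∈ Attr E P1 vin := by
  by_contra hvA
  obtain ⟨π1, hπ1, hwin⟩ := hv
  -- trap strategy for player 2
  set π2 : List V → V → V := fun _ u =>
    if h : ∃ u', E u u' ∧ u' ∉ Attr E P1 vin then h.choose else (hE u).choose with hπ2def
  have hπ2 : IsStrat E (fun u => P1 u = false) π2 := by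
    intro w u _
    by_cases h : ∃ u', E u u' ∧ u' ∉ Attr E P1 vin
    · simpa [hπ2def, dif_pos h] using h.choose_spec.1
    · simpa [hπ2def, dif_neg h] using (hE u).choose_spec
  obtain ⟨i, hi⟩ := hwin π2 hπ2
  have key : ∀ j, play P1 π1 π2 v j ∉ Attr E P1 vin := by
    intro j
    induction j with
    | zero => exact hvA
    | succ j ih =>
      rw [play_succ]
      by_cases hp : P1 (play P1 π1 π2 v j) = true
      · rw [if_pos hp]
        intro hmem
        obtain ⟨k, hk⟩ := Set.mem_iUnion.mp hmem
        apply ih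
        apply Set.mem_iUnion.mpr ⟨k+1, ?_⟩
        exact Or.inr (Or.inl ⟨hp, _, hk, hπ1 _ _ hp⟩)
      · rw [if_neg hp]
        by_cases h : ∃ u', E (play P1 π1 π2 v j) u' ∧ u' ∉ Attr E P1 vin
        · rw [show π2 (playSeq P1 π1 π2 v j).2 (play P1 π1 π2 v j) = h.choose from dif_pos h]
          exact h.choose_spec.2
        · exfalso
          push_neg at h
          apply ih
          apply Set.mem_iUnion.mpr ⟨Kb E P1 vin + 1, ?_⟩
          refine Or.inr (Or.inr ⟨Bool.not_eq_true _ ▸ (by simpa using hp), ?_⟩)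
          intro u' he
          exact mem_attr_Kb E P1 vin (h u' he)
  exact key i (hi ▸ vin_mem_attr E P1 vin)

/-- memoryless attractor strategy -/
noncomputable def sig [Fintype V] (hE : ∀ v, ∃ u, E v u) (v : V) : V :=
  if h : ∃ u, E v u ∧ u ∈ Attr E P1 vin ∧ rk E P1 vin u < rk E P1 vin v
  then h.choose else rr E v 0

lemma E_sig [Fintype V] (hE : ∀ v, ∃ u, E v u) (v : V) : E v (sig E P1 vin hE v) := by
  rw [sig]
  by_cases h : ∃ u, E v u ∧ u ∈ Attr E P1 vin ∧ rk E P1 vin u < rk E P1 vin v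
  · rw [dif_pos h]; exact h.choose_spec.1
  · rw [dif_neg h]; exact E_rr E (hE v) 0

lemma sig_rk [Fintype V] (hE : ∀ v, ∃ u, E v u) {v : V}
    (hv : v ∈ Attr E P1 vin) (hne : v ≠ vin) (hp1 : P1 v = true) :
    rk E P1 vin (sig E P1 vin hE v) < rk E P1 vin v := by
  obtain ⟨u, he, hu, hr⟩ := (attr_step E P1 vin hv hne).1 hp1
  have h : ∃ u, E v u ∧ u ∈ Attr E P1 vin ∧ rk E P1 vin u < rk E P1 vin v := ⟨u, he, hu, hr⟩
  rw [sig, dif_pos h]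
  exact h.choose_spec.2.2

/-- number of occurrences of `vin` in the history -/
noncomputable def vinCnt (w : List V) : ℕ := w.countP (fun x => decide (x = vin))

/-- number of occurrences of `v` in the history after the last occurrence of `vin` -/
noncomputable def epochCnt (w : List V) (v : V) : ℕ :=
  (w.reverse.takeWhile (fun x => decide (x ≠ vin))).countP (fun x => decide (x = v))

lemma vinCnt_snoc (w : List V) (x : V) :
    vinCnt vin (w ++ [x]) = vinCnt vin w + (if x = vin then 1 else 0) := by
  simp [vinCnt, List.countP_append, List.countP_cons]

lemma epochCnt_snoc_vin (w : List V) (v : V) :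
    epochCnt vin (w ++ [vin]) v = 0 := by
  simp [epochCnt, List.takeWhile]

lemma epochCnt_snoc_ne (w : List V) {x : V} (hx : x ≠ vin) (v : V) :
    epochCnt vin (w ++ [x]) v = epochCnt vin w v + (if x = v then 1 else 0) := by
  simp [epochCnt, List.takeWhile, hx, List.countP_cons]

/-- the free-decision condition -/
def FreeAt (w : List V) (v : V) : Prop :=
  epochCnt vin w v < vinCnt vin w

/-- number of free decisions made at `v` in the history `w` -/
noncomputable def freeCnt (w : List V) (v : V) : ℕ :=
  ((Finset.range w.length).filter
    (fun j => w.getD j v = v ∧ FreeAt vin (w.take j) v)).card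

lemma freeCnt_nil (v : V) : freeCnt vin ([] : List V) v = 0 := by
  simp [freeCnt]

lemma freeCnt_snoc (w : List V) (x v : V) :
    freeCnt vin (w ++ [x]) v =
      freeCnt vin w v + (if x = v ∧ FreeAt vin w v then 1 else 0) := by
  rw [freeCnt, freeCnt]
  rw [List.length_append, List.length_singleton, Finset.range_add_one, Finset.filter_insert]
  have hcong : ∀ j ∈ Finset.range w.length,
      ((w ++ [x]).getD j v = v ∧ FreeAt vin ((w ++ [x]).take j) v) ↔
      (w.getD j v = v ∧ FreeAt vin (w.take j) v) := by
    intro j hj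
    have hj' : j < w.length := Finset.mem_range.mp hj
    rw [List.getD_append _ _ _ _ hj', List.take_append_of_le_length (le_of_lt hj')]
  have heq : (Finset.range w.length).filter
      (fun j => (w ++ [x]).getD j v = v ∧ FreeAt vin ((w ++ [x]).take j) v) =
      (Finset.range w.length).filter (fun j => w.getD j v = v ∧ FreeAt vin (w.take j) v) := by
    apply Finset.filter_congr
    intro j hj
    exact propext (hcong j hj) ▸ Iff.rfl
  have hgetD : (w ++ [x]).getD w.length v = x := by
    rw [List.getD_append_right _ _ _ _ (le_refl _)]
    simp
  have htake : (w ++ [x]).take w.length = w := List.take_left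
  by_cases hcond : x = v ∧ FreeAt vin w v
  · rw [if_pos (by rw [hgetD, htake]; exact hcond)]
    rw [Finset.card_insert_of_notMem (by simp)]
    rw [heq]
    simp [hcond]
  · rw [if_neg (by rw [hgetD, htake]; exact hcond)]
    rw [heq]
    simp [hcond]

/-- player 1's strategy -/
noncomputable def piOne [Fintype V] (hE : ∀ v, ∃ u, E v u) : List V → V → V := fun w v =>
  if FreeAt vin w v then rr E v (freeCnt vin w v) else sig E P1 vin hE v

lemma isStrat_piOne [Fintype V] (hE : ∀ v, ∃ u, E v u) :
    IsStrat E (fun u => P1 u = true) (piOne E P1 vin hE) := by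
  intro w v _
  rw [piOne]
  by_cases h : FreeAt vin w v
  · rw [if_pos h]; exact E_rr E (hE v) _
  · rw [if_neg h]; exact E_sig E P1 vin hE v

/-- potential function for the termination argument -/
noncomputable def Phi [Fintype V] (k : ℕ) (w : List V) : ℕ :=
  ∑ v : V, min (epochCnt vin w v) k

lemma Phi_le [Fintype V] (k : ℕ) (w : List V) :
    Phi vin k w ≤ k * Fintype.card V := by
  unfold Phi
  calc ∑ _v : V, min (epochCnt vin w _v) k ≤ ∑ _v : V, k :=
        Finset.sum_le_sum (fun v _ => min_le_right _ _)
  _ = k * Fintype.card V := by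
      rw [Finset.sum_const, Finset.card_univ, smul_eq_mul, mul_comm]

lemma Phi_snoc_mono [Fintype V] (k : ℕ) (w : List V) {x : V} (hx : x ≠ vin) :
    Phi vin k w ≤ Phi vin k (w ++ [x]) := by
  unfold Phi
  refine Finset.sum_le_sum (fun v _ => ?_)
  rw [epochCnt_snoc_ne vin w hx v]
  split_ifs <;> omega

lemma Phi_snoc_lt [Fintype V] (k : ℕ) (w : List V) {x : V} (hx : x ≠ vin)
    (hlt : epochCnt vin w x < k) :
    Phi vin k w + 1 ≤ Phi vin k (w ++ [x]) := by
  have e1 : ∑ v ∈ Finset.univ.erase x, min (epochCnt vin w v) k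
      + min (epochCnt vin w x) k = ∑ v : V, min (epochCnt vin w v) k :=
    Finset.sum_erase_add _ _ (Finset.mem_univ x)
  have e2 : ∑ v ∈ Finset.univ.erase x, min (epochCnt vin (w ++ [x]) v) k
      + min (epochCnt vin (w ++ [x]) x) k = ∑ v : V, min (epochCnt vin (w ++ [x]) v) k :=
    Finset.sum_erase_add _ _ (Finset.mem_univ x)
  have hrest : ∑ v ∈ Finset.univ.erase x, min (epochCnt vin (w ++ [x]) v) k
      = ∑ v ∈ Finset.univ.erase x, min (epochCnt vin w v) k := by
    refine Finset.sum_congr rfl (fun v hv => ?_)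
    rw [epochCnt_snoc_ne vin w hx v,
      if_neg (fun h => (Finset.mem_erase.mp hv).1 h.symm), add_zero]
  have hat : min (epochCnt vin (w ++ [x]) x) k = min (epochCnt vin w x) k + 1 := by
    rw [epochCnt_snoc_ne vin w hx x, if_pos rfl]
    omega
  unfold Phi
  omega

end CRGaux

/-- Let `G = ((V,E),(V_1,V_2), v_in, AP, L)` be a labeled game graph that is
controllably recurrent and `0 ≤ m ≤ |AP|`.  Then there exists a player-1 strategy
`π_1` such that for every player-2 strategy `π_2`, `|L(ω(v_in,π_1,π_2))| ≥ m`, if and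
only if every end component `U` of `G` with `v_in ∈ U` satisfies
`|⋃_{u∈U} L(u)| ≥ m`. -/
theorem controllably_recurrent_game_coverage_iff_end_components
    {V AP : Type*} [Fintype V] [Fintype AP]
    (E : V → V → Prop) (hE : ∀ v, ∃ u, E v u)
    (P1 : V → Bool) (vin : V) (L : V → Set AP)
    (m : ℕ) (hm : m ≤ Fintype.card AP)
    (hcr : ∀ v, Relation.ReflTransGen E vin v →
      ∃ π1, IsStrat E (fun u => P1 u = true) π1 ∧
        ∀ π2, IsStrat E (fun u => P1 u = false) π2 →
          ∃ i : ℕ, play P1 π1 π2 v i = vin) :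
    (∃ π1, IsStrat E (fun u => P1 u = true) π1 ∧
        ∀ π2, IsStrat E (fun u => P1 u = false) π2 →
          m ≤ (⋃ i : ℕ, L (play P1 π1 π2 vin i)).ncard) ↔
      (∀ U : Set V, IsEndComponent E P1 U → vin ∈ U →
        m ≤ (⋃ u ∈ U, L u).ncard) := by
  classical
  constructor
  · rintro ⟨π1, hπ1, hcov⟩ U hU hvU
    obtain ⟨hne, hconn, hclosed⟩ := hU
    set π2 : List V → V → V := fun _ v =>
      if h : ∃ u, E v u ∧ u ∈ U ∧ v ∈ U then h.choose else (hE v).choose with hdef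
    have hπ2 : IsStrat E (fun u => P1 u = false) π2 := by
      intro w v _
      by_cases h : ∃ u, E v u ∧ u ∈ U ∧ v ∈ U
      · simpa [hdef, dif_pos h] using h.choose_spec.1
      · simpa [hdef, dif_neg h] using (hE v).choose_spec
    have hsucc : ∀ v ∈ U, ∃ u, E v u ∧ u ∈ U ∧ v ∈ U := by
      intro v hv
      obtain ⟨b, hb, -⟩ := Relation.TransGen.head'_iff.mp (hconn v hv v hv)
      exact ⟨b, hb.2.2, hb.2.1, hv⟩
    have hinU : ∀ i, play P1 π1 π2 vin i ∈ U := by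
      intro i
      induction i with
      | zero => exact hvU
      | succ i ih =>
        rw [CRGaux.play_succ]
        by_cases hp : P1 (play P1 π1 π2 vin i) = true
        · rw [if_pos hp]
          exact hclosed _ ih hp _ (hπ1 _ _ hp)
        · rw [if_neg hp]
          have h := hsucc _ ih
          rw [show π2 (playSeq P1 π1 π2 vin i).2 (play P1 π1 π2 vin i) = h.choose from dif_pos h]
          exact h.choose_spec.2.1
    have hsub : (⋃ i : ℕ, L (play P1 π1 π2 vin i)) ⊆ ⋃ u ∈ U, L u := by
      intro x hx
      obtain ⟨i, hi⟩ := Set.mem_iUnion.mp hx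
      exact Set.mem_biUnion (hinU i) hi
    exact le_trans (hcov π2 hπ2) (Set.ncard_le_ncard hsub (Set.toFinite _))
  · intro hec
    refine ⟨CRGaux.piOne E P1 vin hE, CRGaux.isStrat_piOne E P1 vin hE, ?_⟩
    intro π2 hπ2
    set π1 : List V → V → V := CRGaux.piOne E P1 vin hE with hπ1def
    have hπ1 : IsStrat E (fun u => P1 u = true) π1 := CRGaux.isStrat_piOne E P1 vin hE
    set p : ℕ → V := fun i => play P1 π1 π2 vin i with hpdef
    set hh : ℕ → List V := fun i => (playSeq P1 π1 π2 vin i).2 with hhdef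
    have hp0 : p 0 = vin := rfl
    have hh0 : hh 0 = [] := rfl
    have hhstep : ∀ i, hh (i+1) = hh i ++ [p i] := fun i => rfl
    have hstep : ∀ i, p (i+1) =
        if P1 (p i) = true then π1 (hh i) (p i) else π2 (hh i) (p i) := by
      intro i
      exact CRGaux.play_succ P1 π1 π2 vin i
    have hEstep : ∀ i, E (p i) (p (i+1)) := by
      intro i
      rw [hstep i]
      by_cases hp : P1 (p i) = true
      · rw [if_pos hp]; exact hπ1 _ _ hp
      · rw [if_neg hp]; exact hπ2 _ _ (by simpa using hp)
    have hreach : ∀ i, Relation.ReflTransGen E vin (p i) := by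
      intro i
      induction i with
      | zero => exact Relation.ReflTransGen.refl
      | succ i ih => exact ih.tail (hEstep i)
    have hAttr : ∀ i, p i ∈ CRGaux.Attr E P1 vin := fun i =>
      CRGaux.attr_complete E P1 vin hE (hcr _ (hreach i))
    have hvc : ∀ i, CRGaux.vinCnt vin (hh (i+1)) =
        CRGaux.vinCnt vin (hh i) + (if p i = vin then 1 else 0) := by
      intro i; rw [hhstep i]; exact CRGaux.vinCnt_snoc vin _ _
    have hec_vin : ∀ i, p i = vin → ∀ v, CRGaux.epochCnt vin (hh (i+1)) v = 0 := by
      intro i hpi v; rw [hhstep i, hpi]; exact CRGaux.epochCnt_snoc_vin vin _ _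
    have hec_ne : ∀ i, p i ≠ vin → ∀ v, CRGaux.epochCnt vin (hh (i+1)) v =
        CRGaux.epochCnt vin (hh i) v + (if p i = v then 1 else 0) := by
      intro i hpi v; rw [hhstep i]; exact CRGaux.epochCnt_snoc_ne vin _ hpi _
    have hfc : ∀ i v, CRGaux.freeCnt vin (hh (i+1)) v = CRGaux.freeCnt vin (hh i) v +
        (if p i = v ∧ CRGaux.FreeAt vin (hh i) v then 1 else 0) := by
      intro i v; rw [hhstep i]; exact CRGaux.freeCnt_snoc vin _ _ _
    have hvc_mono : ∀ i j, i ≤ j →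
        CRGaux.vinCnt vin (hh i) ≤ CRGaux.vinCnt vin (hh j) := by
      intro i j hij
      induction j, hij using Nat.le_induction with
      | base => exact le_refl _
      | succ j hij ih => rw [hvc j]; omega
    have hvc_one : ∀ i, 1 ≤ i → 1 ≤ CRGaux.vinCnt vin (hh i) := by
      intro i hi
      have h0 : CRGaux.vinCnt vin (hh 0) = 0 := by
        rw [hh0]; simp [CRGaux.vinCnt]
      have h1 : CRGaux.vinCnt vin (hh 1) = 1 := by
        rw [hvc 0, hp0, if_pos rfl, h0]
      have := hvc_mono 1 i hi
      omega
    -- vin is visited infinitely often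
    have hrec : ∀ t, ∃ i, t ≤ i ∧ p i = vin := by
      intro t
      by_contra hcon
      push_neg at hcon
      set k := CRGaux.vinCnt vin (hh t) with hkdef
      have hvck : ∀ i, t ≤ i → CRGaux.vinCnt vin (hh i) = k := by
        intro i hi
        induction i, hi using Nat.le_induction with
        | base => rfl
        | succ i hi ih => rw [hvc i, if_neg (hcon i hi)]; omega
      have hΨdec : ∀ i, t ≤ i →
          (k * Fintype.card V - CRGaux.Phi vin k (hh (i+1))) * (CRGaux.Kb E P1 vin + 1)
              + CRGaux.rk E P1 vin (p (i+1)) <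
          (k * Fintype.card V - CRGaux.Phi vin k (hh i)) * (CRGaux.Kb E P1 vin + 1)
              + CRGaux.rk E P1 vin (p i) := by
        intro i hi
        have hne : p i ≠ vin := hcon i hi
        have hPle1 := CRGaux.Phi_le vin k (hh i)
        have hPle2 := CRGaux.Phi_le vin k (hh (i+1))
        have hPmono : CRGaux.Phi vin k (hh i) ≤ CRGaux.Phi vin k (hh (i+1)) := by
          rw [hhstep i]; exact CRGaux.Phi_snoc_mono vin k (hh i) hne
        by_cases hfree : CRGaux.FreeAt vin (hh i) (p i)
        · -- Phi strictly increases
          have hlt : CRGaux.epochCnt vin (hh i) (p i) < k := by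
            have := hfree
            rw [CRGaux.FreeAt, hvck i hi] at this
            exact this
          have hP1 : CRGaux.Phi vin k (hh i) + 1 ≤ CRGaux.Phi vin k (hh (i+1)) := by
            rw [hhstep i]; exact CRGaux.Phi_snoc_lt vin k (hh i) hne hlt
          have hrkle : CRGaux.rk E P1 vin (p (i+1)) ≤ CRGaux.Kb E P1 vin :=
            CRGaux.rk_le_Kb E P1 vin _
          have hml : (k * Fintype.card V - CRGaux.Phi vin k (hh (i+1)) + 1)
                * (CRGaux.Kb E P1 vin + 1)
              ≤ (k * Fintype.card V - CRGaux.Phi vin k (hh i))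
                * (CRGaux.Kb E P1 vin + 1) := by
            apply Nat.mul_le_mul_right
            omega
          rw [add_mul, one_mul] at hml
          omega
        · -- rank strictly decreases
          have hrk : CRGaux.rk E P1 vin (p (i+1)) < CRGaux.rk E P1 vin (p i) := by
            rw [hstep i]
            by_cases hp : P1 (p i) = true
            · rw [if_pos hp]
              have hsig : π1 (hh i) (p i) = CRGaux.sig E P1 vin hE (p i) := by
                rw [hπ1def]
                simp only [CRGaux.piOne]
                rw [if_neg hfree]
              rw [hsig]
              exact CRGaux.sig_rk E P1 vin hE (hAttr i) hne hp
            · have hp2 : P1 (p i) = false := by simpa using hp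
              rw [if_neg hp]
              exact ((CRGaux.attr_step E P1 vin (hAttr i) hne).2 hp2 _ (hπ2 _ _ hp2)).2
          have hml : (k * Fintype.card V - CRGaux.Phi vin k (hh (i+1)))
                * (CRGaux.Kb E P1 vin + 1)
              ≤ (k * Fintype.card V - CRGaux.Phi vin k (hh i))
                * (CRGaux.Kb E P1 vin + 1) := by
            apply Nat.mul_le_mul_right
            omega
          omega
      have hdesc : ∀ j,
          (k * Fintype.card V - CRGaux.Phi vin k (hh (t+j))) * (CRGaux.Kb E P1 vin + 1)
              + CRGaux.rk E P1 vin (p (t+j)) + j ≤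
          (k * Fintype.card V - CRGaux.Phi vin k (hh t)) * (CRGaux.Kb E P1 vin + 1)
              + CRGaux.rk E P1 vin (p t) := by
        intro j
        induction j with
        | zero => simp
        | succ j ih =>
          have h1 := hΨdec (t + j) (Nat.le_add_right _ _)
          have h2 : t + (j+1) = (t + j) + 1 := by omega
          rw [h2]
          omega
      have := hdesc ((k * Fintype.card V - CRGaux.Phi vin k (hh t))
        * (CRGaux.Kb E P1 vin + 1) + CRGaux.rk E P1 vin (p t) + 1)
      omega
    -- the set of vertices visited infinitely often
    set I : Set V := {v | ∀ n, ∃ i, n ≤ i ∧ p i = v} with hIdef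
    have hvinI : vin ∈ I := by
      simp only [hIdef, Set.mem_setOf_eq]
      exact hrec
    have hstab : ∃ T, ∀ i, T ≤ i → p i ∈ I := by
      have hfin : ∀ v : V, ∃ n, v ∈ I ∨ ∀ i, n ≤ i → p i ≠ v := by
        intro v
        by_cases hv : v ∈ I
        · exact ⟨0, Or.inl hv⟩
        · simp only [hIdef, Set.mem_setOf_eq] at hv
          push_neg at hv
          obtain ⟨n, hn⟩ := hv
          exact ⟨n, Or.inr hn⟩
      choose f hf using hfin
      refine ⟨Finset.univ.sup f, fun i hi => ?_⟩
      rcases hf (p i) with h | h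
      · exact h
      · exact absurd rfl (h i (le_trans (Finset.le_sup (Finset.mem_univ _)) hi))
    obtain ⟨T, hT⟩ := hstab
    have hchain : ∀ i j, T ≤ i → i < j →
        Relation.TransGen (fun a b => a ∈ I ∧ b ∈ I ∧ E a b) (p i) (p j) := by
      intro i j hTi hij
      induction j, hij using Nat.le_induction with
      | base => exact Relation.TransGen.single ⟨hT i hTi, hT (i+1) (by omega), hEstep i⟩
      | succ j hij ih => exact ih.tail ⟨hT j (by omega), hT (j+1) (by omega), hEstep j⟩
    have hconn : ∀ u ∈ I, ∀ u' ∈ I,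
        Relation.TransGen (fun a b => a ∈ I ∧ b ∈ I ∧ E a b) u u' := by
      intro u hu u' hu'
      simp only [hIdef, Set.mem_setOf_eq] at hu hu'
      obtain ⟨i, hTi, hpi⟩ := hu T
      obtain ⟨j, hj, hpj⟩ := hu' (i+1)
      have := hchain i j hTi (by omega)
      rwa [hpi, hpj] at this
    have hclosed : ∀ u ∈ I, P1 u = true → ∀ u', E u u' → u' ∈ I := by
      intro u hu hp1 u' he
      simp only [hIdef, Set.mem_setOf_eq] at hu
      -- free decisions at u happen infinitely often
      have hfree : ∀ n, ∃ i, n ≤ i ∧ p i = u ∧ CRGaux.FreeAt vin (hh i) u := by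
        intro n
        obtain ⟨t1, ht1n, ht1⟩ := hrec n
        have hq : ∃ i, t1 + 1 ≤ i ∧ p i = u := hu (t1 + 1)
        obtain ⟨hi0ge, hi0p⟩ := Nat.find_spec hq
        have hmin : ∀ j, j < Nat.find hq → ¬(t1 + 1 ≤ j ∧ p j = u) :=
          fun j hj => Nat.find_min hq hj
        have hec0 : ∀ j, t1 + 1 ≤ j → j ≤ Nat.find hq →
            CRGaux.epochCnt vin (hh j) u = 0 := by
          intro j hj1
          induction j, hj1 using Nat.le_induction with
          | base => intro _; exact hec_vin t1 ht1 u
          | succ j hj ih =>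
            intro hj2
            have hju : p j ≠ u := fun h => hmin j (by omega) ⟨hj, h⟩
            by_cases hjv : p j = vin
            · exact hec_vin j hjv u
            · rw [hec_ne j hjv u, if_neg hju, ih (by omega)]
        refine ⟨Nat.find hq, by omega, hi0p, ?_⟩
        have h0 : CRGaux.epochCnt vin (hh (Nat.find hq)) u = 0 :=
          hec0 (Nat.find hq) hi0ge (le_refl _)
        have h1 : 1 ≤ CRGaux.vinCnt vin (hh (Nat.find hq)) := hvc_one _ (by omega)
        rw [CRGaux.FreeAt, h0]
        omega
      have hfc_le : ∀ i j, i ≤ j →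
          CRGaux.freeCnt vin (hh i) u ≤ CRGaux.freeCnt vin (hh j) u := by
        intro i j hij
        induction j, hij using Nat.le_induction with
        | base => exact le_refl _
        | succ j hij ih => rw [hfc j u]; omega
      have hfc0 : CRGaux.freeCnt vin (hh 0) u = 0 := by
        rw [hh0]; exact CRGaux.freeCnt_nil vin u
      have hfc_bound : ∀ i, CRGaux.freeCnt vin (hh i) u ≤ i := by
        intro i
        induction i with
        | zero => rw [hfc0]
        | succ i ih => rw [hfc i u]; split_ifs <;> omega
      have hunb : ∀ c, ∃ i, c ≤ CRGaux.freeCnt vin (hh i) u := by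
        intro c
        induction c with
        | zero => exact ⟨0, Nat.zero_le _⟩
        | succ c ih =>
          obtain ⟨i, hi⟩ := ih
          obtain ⟨j, hij, hpj, hfree'⟩ := hfree i
          refine ⟨j + 1, ?_⟩
          rw [hfc j u, if_pos ⟨hpj, hfree'⟩]
          have := hfc_le i j hij
          omega
      have hhit : ∀ c, ∃ i, CRGaux.freeCnt vin (hh i) u = c ∧ p i = u ∧
          CRGaux.FreeAt vin (hh i) u := by
        intro c
        have hex : ∃ i, c < CRGaux.freeCnt vin (hh i) u := by
          obtain ⟨i, hi⟩ := hunb (c+1)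
          exact ⟨i, by omega⟩
        have hspec : c < CRGaux.freeCnt vin (hh (Nat.find hex)) u := Nat.find_spec hex
        have hi00 : Nat.find hex ≠ 0 := by
          intro h
          rw [h, hfc0] at hspec
          omega
        obtain ⟨i, hieq⟩ : ∃ i, Nat.find hex = i + 1 := ⟨Nat.find hex - 1, by omega⟩
        have hle : ¬(c < CRGaux.freeCnt vin (hh i) u) := Nat.find_min hex (by omega)
        have hstep' := hfc i u
        rw [hieq] at hspec
        by_cases hcond : p i = u ∧ CRGaux.FreeAt vin (hh i) u
        · rw [if_pos hcond] at hstep'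
          exact ⟨i, by omega, hcond.1, hcond.2⟩
        · rw [if_neg hcond] at hstep'
          omega
      simp only [hIdef, Set.mem_setOf_eq]
      intro n
      obtain ⟨c, hcn, hcrr⟩ := CRGaux.rr_hit E he n
      obtain ⟨i, hfi, hpi, hfree'⟩ := hhit c
      have hile : c ≤ i := by
        have := hfc_bound i
        omega
      refine ⟨i + 1, by omega, ?_⟩
      rw [hstep i, if_pos (by rw [hpi]; exact hp1), hpi]
      rw [hπ1def]
      simp only [CRGaux.piOne]
      rw [if_pos hfree', hfi]
      exact hcrr
    have hIend : IsEndComponent E P1 I := ⟨⟨vin, hvinI⟩, hconn, hclosed⟩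
    have hm' := hec I hIend hvinI
    have hsub : (⋃ u ∈ I, L u) ⊆ ⋃ i : ℕ, L (p i) := by
      intro x hx
      obtain ⟨u, hu, hxu⟩ := Set.mem_iUnion₂.mp hx
      simp only [hIdef, Set.mem_setOf_eq] at hu
      obtain ⟨i, -, hpi⟩ := hu 0
      exact Set.mem_iUnion.mpr ⟨i, hpi ▸ hxu⟩
    exact le_trans hm' (Set.ncard_le_ncard hsub (Set.toFinite _))
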